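/- With H a symmetric 3×3 matrix satisfying H n = 0, P = I - n nᵀ, and K = (tr(H)² - tr(H²))/2, one has tr(H)·H - H² = K·P. In particular, for any tangential vector u (i.e. P u = u), (tr(H) H - H²) u = K u. -/

import Mathlib

open Matrix

/-- For a symmetric `3×3` matrix `H` with `H n = 0` (unit `n`), `P = I - n nᵀ`
and `K = (tr(H)² - tr(H²))/2` one has `tr(H)·H - H² = K·P`; in particular
`(tr(H) H - H²) u = K u` for every tangential vector `u` (i.e. `P u = u`). -/
theorem trace_H_smul_sub_sq (n : Fin 3 → ℝ) (hn : n ⬝ᵥ n = 1)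
    (H : Matrix (Fin 3) (Fin 3) ℝ) (hsym : Hᵀ = H) (hHn : H.mulVec n = 0)
    (P : Matrix (Fin 3) (Fin 3) ℝ) (hP : P = 1 - vecMulVec n n)
    (K : ℝ) (hK : K = ((H.trace) ^ 2 - (H * H).trace) / 2) :
    H.trace • H - H * H = K • P ∧
      ∀ u : Fin 3 → ℝ, P.mulVec u = u → (H.trace • H - H * H).mulVec u = K • u := by
  have e01 : H 1 0 = H 0 1 := congrFun (congrFun hsym 0) 1
  have e02 : H 2 0 = H 0 2 := congrFun (congrFun hsym 0) 2
  have e12 : H 2 1 = H 1 2 := congrFun (congrFun hsym 1) 2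
  have hn3 : n 0 * n 0 + n 1 * n 1 + n 2 * n 2 = 1 := by
    simpa [dotProduct, Fin.sum_univ_three] using hn
  have h0 : H 0 0 * n 0 + H 0 1 * n 1 + H 0 2 * n 2 = 0 := by
    simpa [mulVec, dotProduct, Fin.sum_univ_three] using congrFun hHn 0
  have h1 : H 0 1 * n 0 + H 1 1 * n 1 + H 1 2 * n 2 = 0 := by
    simpa [mulVec, dotProduct, Fin.sum_univ_three, e01] using congrFun hHn 1
  have h2 : H 0 2 * n 0 + H 1 2 * n 1 + H 2 2 * n 2 = 0 := by
    simpa [mulVec, dotProduct, Fin.sum_univ_three, e02, e12] using congrFun hHn 2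
  have key : H.trace • H - H * H = K • P := by
    subst hP hK
    ext i j
    fin_cases i <;> fin_cases j <;>
      simp only [Matrix.sub_apply, Matrix.smul_apply, smul_eq_mul, mul_apply, Fin.sum_univ_three,
        trace_fin_three, one_apply, vecMulVec_apply, Fin.zero_eta, Fin.mk_one,
        Fin.reduceFinMk, Fin.reduceEq, Fin.isValue, e01, e02, e12] <;>
      norm_num
    · linear_combination ((-1)*(H 1 2)^2 + (H 1 1)*(H 2 2) + (H 0 2)*(H 1 2)*(n 0)*(n 1) + (-1)*(H 0 2)*(H 1 1)*(n 0)*(n 2) + (H 0 2)^2*(n 0)^2 + (-1)*(H 0 1)*(H 2 2)*(n 0)*(n 1) + (H 0 1)*(H 1 2)*(n 0)*(n 2) + (H 0 1)^2*(n 0)^2 + (-1)*(H 0 0)*(H 2 2)*(n 0)^2 + (-1)*(H 0 0)*(H 1 1)*(n 0)^2) * hn3 + ((H 2 2)*(n 0)*(n 1)^2 + (H 2 2)*(n 0)^3 + (-2)*(H 1 2)*(n 0)*(n 1)*(n 2) + (H 1 1)*(n 0)*(n 2)^2 + (H 1 1)*(n 0)^3 + (-1)*(H 0 2)*(n 0)^2*(n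 2) + (-1)*(H 0 1)*(n 0)^2*(n 1)) * h0 + ((-1)*(H 2 2)*(n 1) + (H 1 2)*(n 2) + (H 0 2)*(n 0)*(n 1)*(n 2) + (-1)*(H 0 1)*(n 0)*(n 2)^2 + (-1)*(H 0 1)*(n 0)^3 + (H 0 0)*(n 0)^2*(n 1)) * h1 + ((H 1 2)*(n 1) + (-1)*(H 1 1)*(n 2) + (-1)*(H 0 2)*(n 0)*(n 1)^2 + (-1)*(H 0 2)*(n 0)^3 + (H 0 1)*(n 0)*(n 1)*(n 2) + (H 0 0)*(n 0)^2*(n 2)) * h2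
    · linear_combination ((H 1 2)^2*(n 0)*(n 1) + (-1)*(H 1 1)*(H 2 2)*(n 0)*(n 1) + (H 0 2)*(H 1 2) + (H 0 2)*(H 1 2)*(n 0)^2 + (-1)*(H 0 1)*(H 2 2) + (-1)*(H 0 1)*(H 2 2)*(n 0)^2 + (H 0 1)*(H 0 2)*(n 0)*(n 2) + (H 0 1)^2*(n 0)*(n 1) + (-1)*(H 0 0)*(H 1 2)*(n 0)*(n 2) + (-1)*(H 0 0)*(H 1 1)*(n 0)*(n 1)) * hn3 + ((H 2 2)*(n 1) + (-1)*(H 1 2)*(n 2) + (H 1 2)*(n 0)^2*(n 2) + (H 1 1)*(n 0)^2*(n 1) + (-1)*(H 0 1)*(n 0)*(n 2)^2 + (-1)*(H 0 1)*(n 0)*(n 1)^2) * h0 + ((H 2 2)*(n 0)*(n 1)^2 + (H 2 2)*(n 0)^3 + (-1)*(H 1 2)*(n 0)*(n 1)*(n 2) + (-2)*(H 0 2)*(n 0)^2*(n 2) + (-1)*(H 0 1)*(n 0)^2*(n 1) + (H 0 0)*(n 0)*(n 2)^2 + (H 0 0)*(n 0)*(n 1)^2) * h1 + ((-1)*(H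 1 2)*(n 0)*(n 1)^2 + (-1)*(H 1 2)*(n 0)^3 + (H 1 1)*(n 0)*(n 1)*(n 2) + (-1)*(H 0 2)*(n 1) + (H 0 1)*(n 2) + (H 0 1)*(n 0)^2*(n 2)) * h2
    · linear_combination ((H 1 2)^2*(n 0)*(n 2) + (-1)*(H 1 1)*(H 2 2)*(n 0)*(n 2) + (-1)*(H 0 2)*(H 1 1) + (-1)*(H 0 2)*(H 1 1)*(n 0)^2 + (H 0 2)^2*(n 0)*(n 2) + (H 0 1)*(H 1 2) + (H 0 1)*(H 1 2)*(n 0)^2 + (H 0 1)*(H 0 2)*(n 0)*(n 1) + (-1)*(H 0 0)*(H 2 2)*(n 0)*(n 2) + (-1)*(H 0 0)*(H 1 2)*(n 0)*(n 1)) * hn3 + ((H 2 2)*(n 0)^2*(n 2) + (-1)*(H 1 2)*(n 1) + (H 1 2)*(n 0)^2*(n 1) + (H 1 1)*(n 2) + (-1)*(H 0 2)*(n 0)*(n 2)^2 + (-1)*(H 0 2)*(n 0)*(n 1)^2) * h0 + ((H 2 2)*(n 0)*(n 1)*(n 2) + (-1)*(H 1 2)*(n 0)*(n 2)^2 + (-1)*(H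 1 2)*(n 0)^3 + (H 0 2)*(n 1) + (H 0 2)*(n 0)^2*(n 1) + (-1)*(H 0 1)*(n 2)) * h1 + ((-1)*(H 1 2)*(n 0)*(n 1)*(n 2) + (H 1 1)*(n 0)*(n 2)^2 + (H 1 1)*(n 0)^3 + (-1)*(H 0 2)*(n 0)^2*(n 2) + (-2)*(H 0 1)*(n 0)^2*(n 1) + (H 0 0)*(n 0)*(n 2)^2 + (H 0 0)*(n 0)*(n 1)^2) * h2
    · linear_combination ((H 0 2)*(H 1 2) + (H 0 2)*(H 1 2)*(n 1)^2 + (-1)*(H 0 2)*(H 1 1)*(n 1)*(n 2) + (H 0 2)^2*(n 0)*(n 1) + (-1)*(H 0 1)*(H 2 2) + (-1)*(H 0 1)*(H 2 2)*(n 1)^2 + (H 0 1)*(H 1 2)*(n 1)*(n 2) + (H 0 1)^2*(n 0)*(n 1) + (-1)*(H 0 0)*(H 2 2)*(n 0)*(n 1) + (-1)*(H 0 0)*(H 1 1)*(n 0)*(n 1)) * hn3 + ((H 2 2)*(n 1)^3 + (H 2 2)*(n 0)^2*(n 1) + (-2)*(H 1 2)*(n 1)^2*(n 2) + (H 1 1)*(n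 1)*(n 2)^2 + (H 1 1)*(n 0)^2*(n 1) + (-1)*(H 0 2)*(n 0)*(n 1)*(n 2) + (-1)*(H 0 1)*(n 0)*(n 1)^2) * h0 + ((H 2 2)*(n 0) + (-1)*(H 0 2)*(n 2) + (H 0 2)*(n 1)^2*(n 2) + (-1)*(H 0 1)*(n 1)*(n 2)^2 + (-1)*(H 0 1)*(n 0)^2*(n 1) + (H 0 0)*(n 0)*(n 1)^2) * h1 + ((-1)*(H 1 2)*(n 0) + (-1)*(H 0 2)*(n 1)^3 + (-1)*(H 0 2)*(n 0)^2*(n 1) + (H 0 1)*(n 2) + (H 0 1)*(n 1)^2*(n 2) + (H 0 0)*(n 0)*(n 1)*(n 2)) * h2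
    · linear_combination ((H 1 2)^2*(n 1)^2 + (-1)*(H 1 1)*(H 2 2)*(n 1)^2 + (H 0 2)*(H 1 2)*(n 0)*(n 1) + (-1)*(H 0 2)^2 + (-1)*(H 0 1)*(H 2 2)*(n 0)*(n 1) + (H 0 1)*(H 0 2)*(n 1)*(n 2) + (H 0 1)^2*(n 1)^2 + (H 0 0)*(H 2 2) + (-1)*(H 0 0)*(H 1 2)*(n 1)*(n 2) + (-1)*(H 0 0)*(H 1 1)*(n 1)^2) * hn3 + ((-1)*(H 2 2)*(n 0) + (H 1 2)*(n 0)*(n 1)*(n 2) + (H 1 1)*(n 0)*(n 1)^2 + (H 0 2)*(n 2) + (-1)*(H 0 1)*(n 1)*(n 2)^2 + (-1)*(H 0 1)*(n 1)^3) * h0 + ((H 2 2)*(n 1)^3 + (H 2 2)*(n 0)^2*(n 1) + (-1)*(H 1 2)*(n 1)^2*(n 2) + (-2)*(H 0 2)*(n 0)*(n 1)*(n 2) + (-1)*(H 0 1)*(n 0)*(n 1)^2 + (H 0 0)*(n 1)*(n 2)^2 + (H 0 0)*(n 1)^3) * h1 + ((-1)*(H 1 2)*(n 1)^3 + (-1)*(H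 1 2)*(n 0)^2*(n 1) + (H 1 1)*(n 1)^2*(n 2) + (H 0 2)*(n 0) + (H 0 1)*(n 0)*(n 1)*(n 2) + (-1)*(H 0 0)*(n 2)) * h2
    · linear_combination ((H 1 2)^2*(n 1)*(n 2) + (-1)*(H 1 1)*(H 2 2)*(n 1)*(n 2) + (-1)*(H 0 2)*(H 1 1)*(n 0)*(n 1) + (H 0 2)^2*(n 1)*(n 2) + (H 0 1)*(H 1 2)*(n 0)*(n 1) + (H 0 1)*(H 0 2) + (H 0 1)*(H 0 2)*(n 1)^2 + (-1)*(H 0 0)*(H 2 2)*(n 1)*(n 2) + (-1)*(H 0 0)*(H 1 2) + (-1)*(H 0 0)*(H 1 2)*(n 1)^2) * hn3 + ((H 2 2)*(n 0)*(n 1)*(n 2) + (H 1 2)*(n 0) + (H 1 2)*(n 0)*(n 1)^2 + (-1)*(H 0 2)*(n 1)*(n 2)^2 + (-1)*(H 0 2)*(n 1)^3 + (-1)*(H 0 1)*(n 2)) * h0 + ((H 2 2)*(n 1)^2*(n 2) + (-1)*(H 1 2)*(n 1)*(n 2)^2 + (-1)*(H 1 2)*(n 0)^2*(n 1) + (-1)*(H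 0 2)*(n 0) + (H 0 2)*(n 0)*(n 1)^2 + (H 0 0)*(n 2)) * h1 + ((-1)*(H 1 2)*(n 1)^2*(n 2) + (H 1 1)*(n 1)*(n 2)^2 + (H 1 1)*(n 0)^2*(n 1) + (-1)*(H 0 2)*(n 0)*(n 1)*(n 2) + (-2)*(H 0 1)*(n 0)*(n 1)^2 + (H 0 0)*(n 1)*(n 2)^2 + (H 0 0)*(n 1)^3) * h2
    · linear_combination ((H 0 2)*(H 1 2)*(n 1)*(n 2) + (-1)*(H 0 2)*(H 1 1) + (-1)*(H 0 2)*(H 1 1)*(n 2)^2 + (H 0 2)^2*(n 0)*(n 2) + (-1)*(H 0 1)*(H 2 2)*(n 1)*(n 2) + (H 0 1)*(H 1 2) + (H 0 1)*(H 1 2)*(n 2)^2 + (H 0 1)^2*(n 0)*(n 2) + (-1)*(H 0 0)*(H 2 2)*(n 0)*(n 2) + (-1)*(H 0 0)*(H 1 1)*(n 0)*(n 2)) * hn3 + ((H 2 2)*(n 1)^2*(n 2) + (H 2 2)*(n 0)^2*(n 2) + (-2)*(H 1 2)*(n 1)*(n 2)^2 + (H 1 1)*(n 2)^3 + (H 1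 1)*(n 0)^2*(n 2) + (-1)*(H 0 2)*(n 0)*(n 2)^2 + (-1)*(H 0 1)*(n 0)*(n 1)*(n 2)) * h0 + ((-1)*(H 1 2)*(n 0) + (H 0 2)*(n 1) + (H 0 2)*(n 1)*(n 2)^2 + (-1)*(H 0 1)*(n 2)^3 + (-1)*(H 0 1)*(n 0)^2*(n 2) + (H 0 0)*(n 0)*(n 1)*(n 2)) * h1 + ((H 1 1)*(n 0) + (-1)*(H 0 2)*(n 1)^2*(n 2) + (-1)*(H 0 2)*(n 0)^2*(n 2) + (-1)*(H 0 1)*(n 1) + (H 0 1)*(n 1)*(n 2)^2 + (H 0 0)*(n 0)*(n 2)^2) * h2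
    · linear_combination ((H 1 2)^2*(n 1)*(n 2) + (-1)*(H 1 1)*(H 2 2)*(n 1)*(n 2) + (H 0 2)*(H 1 2)*(n 0)*(n 2) + (-1)*(H 0 1)*(H 2 2)*(n 0)*(n 2) + (H 0 1)*(H 0 2) + (H 0 1)*(H 0 2)*(n 2)^2 + (H 0 1)^2*(n 1)*(n 2) + (-1)*(H 0 0)*(H 1 2) + (-1)*(H 0 0)*(H 1 2)*(n 2)^2 + (-1)*(H 0 0)*(H 1 1)*(n 1)*(n 2)) * hn3 + ((H 1 2)*(n 0) + (H 1 2)*(n 0)*(n 2)^2 + (H 1 1)*(n 0)*(n 1)*(n 2) + (-1)*(H 0 2)*(n 1) + (-1)*(H 0 1)*(n 2)^3 + (-1)*(H 0 1)*(n 1)^2*(n 2)) * h0 + ((H 2 2)*(n 1)^2*(n 2) + (H 2 2)*(n 0)^2*(n 2) + (-1)*(H 1 2)*(n 1)*(n 2)^2 + (-2)*(H 0 2)*(n 0)*(n 2)^2 + (-1)*(H 0 1)*(n 0)*(n 1)*(n 2) + (H 0 0)*(n 2)^3 + (H 0 0)*(n 1)^2*(n 2)) * h1 + ((-1)*(H 1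 2)*(n 1)^2*(n 2) + (-1)*(H 1 2)*(n 0)^2*(n 2) + (H 1 1)*(n 1)*(n 2)^2 + (-1)*(H 0 1)*(n 0) + (H 0 1)*(n 0)*(n 2)^2 + (H 0 0)*(n 1)) * h2
    · linear_combination ((H 1 2)^2*(n 2)^2 + (-1)*(H 1 1)*(H 2 2)*(n 2)^2 + (-1)*(H 0 2)*(H 1 1)*(n 0)*(n 2) + (H 0 2)^2*(n 2)^2 + (H 0 1)*(H 1 2)*(n 0)*(n 2) + (H 0 1)*(H 0 2)*(n 1)*(n 2) + (-1)*(H 0 1)^2 + (-1)*(H 0 0)*(H 2 2)*(n 2)^2 + (-1)*(H 0 0)*(H 1 2)*(n 1)*(n 2) + (H 0 0)*(H 1 1)) * hn3 + ((H 2 2)*(n 0)*(n 2)^2 + (H 1 2)*(n 0)*(n 1)*(n 2) + (-1)*(H 1 1)*(n 0) + (-1)*(H 0 2)*(n 2)^3 + (-1)*(H 0 2)*(n 1)^2*(n 2) + (H 0 1)*(n 1)) * h0 + ((H 2 2)*(n 1)*(n 2)^2 + (-1)*(H 1 2)*(n 2)^3 + (-1)*(H 1 2)*(n 0)^2*(n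 2) + (H 0 2)*(n 0)*(n 1)*(n 2) + (H 0 1)*(n 0) + (-1)*(H 0 0)*(n 1)) * h1 + ((-1)*(H 1 2)*(n 1)*(n 2)^2 + (H 1 1)*(n 2)^3 + (H 1 1)*(n 0)^2*(n 2) + (-1)*(H 0 2)*(n 0)*(n 2)^2 + (-2)*(H 0 1)*(n 0)*(n 1)*(n 2) + (H 0 0)*(n 2)^3 + (H 0 0)*(n 1)^2*(n 2)) * h2
  refine ⟨key, fun u hu => ?_⟩
  rw [key, Matrix.smul_mulVec, hu]
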